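/- Fix I_0 > 0 with I_0 ≤ I_max (the maximum of I(X;Y_N) over quantizers). If q* maximizes H(Y_N|Y) over the set of quantizers q satisfying I(X;Y_N)(q) ≥ I_0, then the constraint is active at q*: I(X;Y_N)(q*) = I_0. -/

import Mathlib

open Real

/-- Marginal of X from the joint distribution P(x,y). -/
noncomputable def pX {Kx K : ℕ} (P : Fin Kx → Fin K → ℝ) (x : Fin Kx) : ℝ :=
  ∑ k, P x k

/-- Marginal of Y from the joint distribution P(x,y). -/
noncomputable def pY {Kx K : ℕ} (P : Fin Kx → Fin K → ℝ) (k : Fin K) : ℝ :=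
  ∑ x, P x k

/-- Joint distribution of (X, Y_N) induced by the quantizer q. -/
noncomputable def pXN {Kx K N : ℕ} (P : Fin Kx → Fin K → ℝ)
    (q : Fin N → Fin K → ℝ) (x : Fin Kx) (ν : Fin N) : ℝ :=
  ∑ k, P x k * q ν k

/-- Marginal of Y_N induced by the quantizer q and a distribution p on Y. -/
noncomputable def pN {K N : ℕ} (p : Fin K → ℝ) (q : Fin N → Fin K → ℝ) (ν : Fin N) : ℝ :=
  ∑ k, p k * q ν k

/-- Conditional entropy H(Y_N|Y). -/
noncomputable def Hcond {K N : ℕ} (p : Fin K → ℝ) (q : Fin N → Fin K → ℝ) : ℝ :=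
  -∑ k, p k * ∑ ν, q ν k * Real.log (q ν k)

/-- Mutual information I(Y;Y_N) induced by the quantizer q. -/
noncomputable def IYN {K N : ℕ} (p : Fin K → ℝ) (q : Fin N → Fin K → ℝ) : ℝ :=
  ∑ ν, ∑ k, q ν k * p k * Real.log (q ν k / pN p q ν)

/-- Mutual information I(X;Y_N) induced by the quantizer q through X → Y → Y_N. -/
noncomputable def IXN {Kx K N : ℕ} (P : Fin Kx → Fin K → ℝ)
    (q : Fin N → Fin K → ℝ) : ℝ :=
  ∑ x, ∑ ν, pXN P q x ν * Real.log (pXN P q x ν / (pX P x * pN (pY P) q ν))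

/-- Mutual information I(X;Y). -/
noncomputable def IXY {Kx K : ℕ} (P : Fin Kx → Fin K → ℝ) : ℝ :=
  ∑ x, ∑ k, P x k * Real.log (P x k / (pX P x * pY P k))

/-- The set Δ of stochastic quantizers. -/
def Δset (N K : ℕ) : Set (Fin N → Fin K → ℝ) :=
  {q | (∀ ν k, 0 ≤ q ν k) ∧ ∀ k, ∑ ν, q ν k = 1}

/-- The (ambient-coordinate) gradient of I(X;Y_N): ∂I/∂q_{νk} = ∑_x p(x,y_k) ln(p(x|ν)/p(x)). -/
noncomputable def gradI {Kx K N : ℕ} (P : Fin Kx → Fin K → ℝ)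
    (q : Fin N → Fin K → ℝ) (ν : Fin N) (k : Fin K) : ℝ :=
  ∑ x, P x k * Real.log ((pXN P q x ν / pN (pY P) q ν) / pX P x)

section AuxEntropy
open Filter

-- per-term entropy bound
lemma term_le {n : ℝ} (hn : 0 < n) {w : ℝ} (hw : 0 ≤ w) :
    -(w * Real.log w) - w * Real.log n ≤ n⁻¹ - w := by
  rcases eq_or_lt_of_le hw with h | h
  · simp [← h]; positivity
  · have h1 : (0:ℝ) < (n*w)⁻¹ := by positivity
    have := Real.log_le_sub_one_of_pos h1
    have hlog : Real.log ((n*w)⁻¹) = -(Real.log n + Real.log w) := by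
      rw [Real.log_inv, Real.log_mul (ne_of_gt hn) (ne_of_gt h)]
    have h2 : w * Real.log ((n*w)⁻¹) ≤ w * ((n*w)⁻¹ - 1) :=
      mul_le_mul_of_nonneg_left this hw
    rw [hlog] at h2
    have : w * ((n*w)⁻¹ - 1) = n⁻¹ - w := by
      field_simp
    nlinarith [h2]

lemma term_lt {n : ℝ} (hn : 0 < n) {w : ℝ} (hw : 0 ≤ w) (hne : w ≠ n⁻¹) :
    -(w * Real.log w) - w * Real.log n < n⁻¹ - w := by
  rcases eq_or_lt_of_le hw with h | h
  · simp [← h]; positivity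
  · have h1 : (0:ℝ) < (n*w)⁻¹ := by positivity
    have hne1 : (n*w)⁻¹ ≠ 1 := by
      intro hh
      apply hne
      field_simp at hh
      field_simp [hh]
      rw [mul_comm]; exact hh.symm
    have := Real.log_lt_sub_one_of_pos h1 hne1
    have hlog : Real.log ((n*w)⁻¹) = -(Real.log n + Real.log w) := by
      rw [Real.log_inv, Real.log_mul (ne_of_gt hn) (ne_of_gt h)]
    have h2 : w * Real.log ((n*w)⁻¹) < w * ((n*w)⁻¹ - 1) :=
      mul_lt_mul_of_pos_left this h
    rw [hlog] at h2
    have : w * ((n*w)⁻¹ - 1) = n⁻¹ - w := by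
      field_simp
    nlinarith [h2]

lemma entropy_col_lt {N : ℕ} (hN : 0 < N) (w : Fin N → ℝ) (hw : ∀ ν, 0 ≤ w ν)
    (hs : ∑ ν, w ν = 1) (ν0 : Fin N) (hν0 : w ν0 ≠ ((N:ℝ))⁻¹) :
    -∑ ν, w ν * Real.log (w ν) < Real.log N := by
  have hn : (0:ℝ) < N := by exact_mod_cast hN
  have key : ∑ ν, (-(w ν * Real.log (w ν)) - w ν * Real.log N) <
      ∑ ν : Fin N, (((N:ℝ))⁻¹ - w ν) := by
    apply Finset.sum_lt_sum (fun ν _ => term_le hn (hw ν))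
    exact ⟨ν0, Finset.mem_univ _, term_lt hn (hw ν0) hν0⟩
  have h1 : ∑ ν : Fin N, (((N:ℝ))⁻¹ - w ν) = 0 := by
    rw [Finset.sum_sub_distrib, hs, Finset.sum_const, Finset.card_univ, Fintype.card_fin]
    field_simp
    simp [nsmul_eq_mul, hn.ne']
  have h2 : ∑ ν, (-(w ν * Real.log (w ν)) - w ν * Real.log N) =
      -∑ ν, w ν * Real.log (w ν) - Real.log N := by
    rw [Finset.sum_sub_distrib, ← Finset.sum_neg_distrib, ← Finset.sum_mul, hs, one_mul]
  rw [h2, h1] at key; linarith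

lemma entropy_col_le {N : ℕ} (hN : 0 < N) (w : Fin N → ℝ) (hw : ∀ ν, 0 ≤ w ν)
    (hs : ∑ ν, w ν = 1) :
    -∑ ν, w ν * Real.log (w ν) ≤ Real.log N := by
  have hn : (0:ℝ) < N := by exact_mod_cast hN
  have key : ∑ ν, (-(w ν * Real.log (w ν)) - w ν * Real.log N) ≤
      ∑ ν : Fin N, (((N:ℝ))⁻¹ - w ν) :=
    Finset.sum_le_sum (fun ν _ => term_le hn (hw ν))
  have h1 : ∑ ν : Fin N, (((N:ℝ))⁻¹ - w ν) = 0 := by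
    rw [Finset.sum_sub_distrib, hs, Finset.sum_const, Finset.card_univ, Fintype.card_fin]
    field_simp
    simp [nsmul_eq_mul, hn.ne']
  have h2 : ∑ ν, (-(w ν * Real.log (w ν)) - w ν * Real.log N) =
      -∑ ν, w ν * Real.log (w ν) - Real.log N := by
    rw [Finset.sum_sub_distrib, ← Finset.sum_neg_distrib, ← Finset.sum_mul, hs, one_mul]
  rw [h2, h1] at key; linarith

lemma Hcond_lt {K N : ℕ} (hN : 0 < N) (p : Fin K → ℝ) (hp : ∀ k, 0 < p k)
    (hpsum : ∑ k, p k = 1) (q : Fin N → Fin K → ℝ) (hq0 : ∀ ν k, 0 ≤ q ν k)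
    (hq1 : ∀ k, ∑ ν, q ν k = 1) (ν0 : Fin N) (k0 : Fin K) (hne : q ν0 k0 ≠ ((N:ℝ))⁻¹) :
    Hcond p q < Real.log N := by
  have h1 : Hcond p q = ∑ k, p k * (-∑ ν, q ν k * Real.log (q ν k)) := by
    rw [Hcond, ← Finset.sum_neg_distrib]
    exact Finset.sum_congr rfl fun k _ => (mul_neg _ _).symm
  have key : ∑ k, p k * (-∑ ν, q ν k * Real.log (q ν k)) < ∑ k : Fin K, p k * Real.log N := by
    apply Finset.sum_lt_sum
    · exact fun k _ => mul_le_mul_of_nonneg_left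
        (entropy_col_le hN _ (fun ν => hq0 ν k) (hq1 k)) (hp k).le
    · exact ⟨k0, Finset.mem_univ _, mul_lt_mul_of_pos_left
        (entropy_col_lt hN _ (fun ν => hq0 ν k0) (hq1 k0) ν0 hne) (hp k0)⟩
  rw [h1]
  calc _ < ∑ k : Fin K, p k * Real.log N := key
    _ = Real.log N := by rw [← Finset.sum_mul, hpsum, one_mul]

lemma Hcond_unif {K N : ℕ} (hN : 0 < N) (p : Fin K → ℝ) (hpsum : ∑ k, p k = 1) :
    Hcond p (fun (_ : Fin N) (_ : Fin K) => ((N:ℝ))⁻¹) = Real.log N := by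
  have hn : ((N:ℝ)) ≠ 0 := by positivity
  have h1 : (∑ _ν : Fin N, ((N:ℝ))⁻¹ * Real.log ((N:ℝ))⁻¹) = Real.log ((N:ℝ))⁻¹ := by
    rw [Finset.sum_const, Finset.card_univ, Fintype.card_fin, nsmul_eq_mul]
    field_simp
  simp only [Hcond, h1]
  rw [← Finset.sum_mul, hpsum, one_mul, Real.log_inv, neg_neg]

lemma IXN_unif {Kx K N : ℕ} (hN : 0 < N) (P : Fin Kx → Fin K → ℝ)
    (hpX : ∀ x, 0 < pX P x) (hpsum : ∑ k, pY P k = 1) :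
    IXN P (fun (_ : Fin N) (_ : Fin K) => ((N:ℝ))⁻¹) = 0 := by
  have hn : ((N:ℝ)) ≠ 0 := by positivity
  have h1 : ∀ ν : Fin N, pN (pY P) (fun (_ : Fin N) (_ : Fin K) => ((N:ℝ))⁻¹) ν = ((N:ℝ))⁻¹ := by
    intro ν; simp only [pN]; rw [← Finset.sum_mul, hpsum, one_mul]
  have h2 : ∀ x (ν : Fin N), pXN P (fun (_ : Fin N) (_ : Fin K) => ((N:ℝ))⁻¹) x ν
      = pX P x * ((N:ℝ))⁻¹ := by
    intro x ν; simp only [pXN, pX]; rw [← Finset.sum_mul]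
  simp only [IXN, h1, h2]
  have : ∀ x : Fin Kx, pX P x * ((N:ℝ))⁻¹ / (pX P x * ((N:ℝ))⁻¹) = 1 := by
    intro x
    have := hpX x
    exact div_self (by positivity)
  simp [this]

lemma pXN_lin {Kx K N : ℕ} (P : Fin Kx → Fin K → ℝ) (qs : Fin N → Fin K → ℝ)
    (t : ℝ) (x : Fin Kx) (ν : Fin N) :
    pXN P (fun ν k => (1-t) * qs ν k + t * ((N:ℝ))⁻¹) x ν
      = (1-t) * pXN P qs x ν + t * (pX P x * ((N:ℝ))⁻¹) := by
  simp only [pXN, pX, Finset.mul_sum, Finset.sum_mul, mul_add, ← Finset.sum_add_distrib]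
  exact Finset.sum_congr rfl fun k _ => by ring

lemma pN_lin {K N : ℕ} (p : Fin K → ℝ) (hpsum : ∑ k, p k = 1) (qs : Fin N → Fin K → ℝ)
    (t : ℝ) (ν : Fin N) :
    pN p (fun ν k => (1-t) * qs ν k + t * ((N:ℝ))⁻¹) ν
      = (1-t) * pN p qs ν + t * ((N:ℝ))⁻¹ := by
  have : (N:ℝ)⁻¹ = (∑ k, p k) * (N:ℝ)⁻¹ := by rw [hpsum, one_mul]
  rw [pN]
  conv_rhs => rw [this]
  simp only [pN, Finset.mul_sum, Finset.sum_mul, mul_add, ← Finset.sum_add_distrib]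
  exact Finset.sum_congr rfl fun k _ => by ring

lemma sum_mul_expand {K : ℕ} (p S T : Fin K → ℝ) (u v : ℝ) :
    ∑ k, p k * (u * S k + v * T k) = u * ∑ k, p k * S k + v * ∑ k, p k * T k := by
  rw [Finset.mul_sum, Finset.mul_sum, ← Finset.sum_add_distrib]
  exact Finset.sum_congr rfl fun k _ => by ring

lemma Hcond_concave {K N : ℕ} (hN : 0 < N) (p : Fin K → ℝ) (hp : ∀ k, 0 ≤ p k)
    (qs : Fin N → Fin K → ℝ) (hq0 : ∀ ν k, 0 ≤ qs ν k)
    {t : ℝ} (ht0 : 0 ≤ t) (ht1 : t ≤ 1) :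
    (1-t) * Hcond p qs + t * Hcond p (fun (_ : Fin N) (_ : Fin K) => ((N:ℝ))⁻¹)
      ≤ Hcond p (fun ν k => (1-t) * qs ν k + t * ((N:ℝ))⁻¹) := by
  have key : ∀ (ν : Fin N) (k : Fin K),
      ((1-t)*qs ν k + t*((N:ℝ))⁻¹) * Real.log ((1-t)*qs ν k + t*((N:ℝ))⁻¹)
      ≤ (1-t) * (qs ν k * Real.log (qs ν k)) + t * (((N:ℝ))⁻¹ * Real.log ((N:ℝ))⁻¹) := by
    intro ν k
    have := Real.convexOn_mul_log.2 (Set.mem_Ici.2 (hq0 ν k))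
      (Set.mem_Ici.2 (by positivity : (0:ℝ) ≤ ((N:ℝ))⁻¹))
      (show (0:ℝ) ≤ 1 - t by linarith) ht0 (show (1:ℝ) - t + t = 1 by ring)
    simpa only [smul_eq_mul] using this
  have inner : ∀ k : Fin K,
      ∑ ν, ((1-t)*qs ν k + t*((N:ℝ))⁻¹) * Real.log ((1-t)*qs ν k + t*((N:ℝ))⁻¹)
      ≤ (1-t) * (∑ ν, qs ν k * Real.log (qs ν k))
        + t * (∑ _ν : Fin N, ((N:ℝ))⁻¹ * Real.log ((N:ℝ))⁻¹) := by
    intro k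
    calc _ ≤ ∑ ν, ((1-t) * (qs ν k * Real.log (qs ν k))
          + t * (((N:ℝ))⁻¹ * Real.log ((N:ℝ))⁻¹)) := Finset.sum_le_sum fun ν _ => key ν k
      _ = _ := by rw [Finset.sum_add_distrib, ← Finset.mul_sum, ← Finset.mul_sum]
  have step : ∑ k, p k * ∑ ν, ((1-t)*qs ν k + t*((N:ℝ))⁻¹) * Real.log ((1-t)*qs ν k + t*((N:ℝ))⁻¹)
      ≤ (1-t) * ∑ k, p k * (∑ ν, qs ν k * Real.log (qs ν k))
        + t * ∑ k, p k * (∑ _ν : Fin N, ((N:ℝ))⁻¹ * Real.log ((N:ℝ))⁻¹) := by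
    calc _ ≤ ∑ k, p k * ((1-t) * (∑ ν, qs ν k * Real.log (qs ν k))
          + t * (∑ _ν : Fin N, ((N:ℝ))⁻¹ * Real.log ((N:ℝ))⁻¹)) :=
        Finset.sum_le_sum fun k _ => mul_le_mul_of_nonneg_left (inner k) (hp k)
      _ = _ := sum_mul_expand p _ _ (1-t) t
  simp only [Hcond]
  linarith [step]

lemma cont_term {A B c nv : ℝ} (hA : 0 ≤ A) (hAB : A ≤ B) (hc : 0 < c) (hnv : 0 < nv) :
    ContinuousAt (fun t : ℝ => ((1-t)*A + t*(c*nv)) *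
      Real.log (((1-t)*A + t*(c*nv)) / (c * ((1-t)*B + t*nv)))) 0 := by
  rcases eq_or_lt_of_le (hA.trans hAB) with hB | hB
  · -- B = 0, hence A = 0, function is identically 0
    have hA0 : A = 0 := le_antisymm (hAB.trans hB.symm.le) hA
    have hB0 : B = 0 := hB.symm
    have hfun : (fun t : ℝ => ((1-t)*A + t*(c*nv)) *
        Real.log (((1-t)*A + t*(c*nv)) / (c * ((1-t)*B + t*nv)))) = fun _ => (0:ℝ) := by
      funext t
      rcases eq_or_ne t 0 with rfl | ht
      · simp [hA0]
      · have e1 : (1-t)*A + t*(c*nv) = c*(t*nv) := by rw [hA0]; ring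
        have e2 : c * ((1-t)*B + t*nv) = c*(t*nv) := by rw [hB0]; ring
        rw [e1, e2, div_self (mul_ne_zero (ne_of_gt hc) (mul_ne_zero ht (ne_of_gt hnv))), Real.log_one, mul_zero]
    rw [hfun]; exact continuousAt_const
  · -- B > 0
    have hb0 : (0:ℝ) < c * ((1-(0:ℝ))*B + 0*nv) := by simpa using mul_pos hc hB
    have ha : Continuous fun t : ℝ => (1-t)*A + t*(c*nv) := by continuity
    have hbc : Continuous fun t : ℝ => c * ((1-t)*B + t*nv) := by continuity
    have hg : ContinuousAt (fun t : ℝ => ((1-t)*A + t*(c*nv)) * Real.log ((1-t)*A + t*(c*nv))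
        - ((1-t)*A + t*(c*nv)) * Real.log (c * ((1-t)*B + t*nv))) 0 := by
      exact ((Real.continuous_mul_log.comp ha).continuousAt).sub
        (ha.continuousAt.mul (hbc.continuousAt.log (ne_of_gt hb0)))
    apply hg.congr
    have hopen : ∀ᶠ t : ℝ in nhds 0, 0 < c * ((1-t)*B + t*nv) :=
      (isOpen_lt continuous_const hbc).mem_nhds (by simpa using hb0)
    filter_upwards [hopen] with t ht
    rcases eq_or_ne ((1-t)*A + t*(c*nv)) 0 with h0 | h0
    · simp [h0]
    · rw [Real.log_div h0 (ne_of_gt ht), mul_sub]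

theorem stmt2 {Kx K N : ℕ} (P : Fin Kx → Fin K → ℝ) (hP : ∀ x k, 0 ≤ P x k)
    (hPsum : ∑ x, ∑ k, P x k = 1) (hpY : ∀ k, 0 < pY P k) (hpX : ∀ x, 0 < pX P x)
    (I0 : ℝ) (hI0 : 0 < I0)
    (hImax : ∃ q ∈ Δset N K, I0 ≤ IXN P q)
    (qs : Fin N → Fin K → ℝ) (hqs : qs ∈ Δset N K) (hfeas : I0 ≤ IXN P qs)
    (hmax : ∀ q ∈ Δset N K, I0 ≤ IXN P q → Hcond (pY P) q ≤ Hcond (pY P) qs) :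
    IXN P qs = I0 := by
  by_contra hne
  have hgt : I0 < IXN P qs := lt_of_le_of_ne hfeas (fun h => hne h.symm)
  have hK : K ≠ 0 := by rintro rfl; simp at hPsum
  have hN : 0 < N := by
    rcases Nat.eq_zero_or_pos N with rfl | h
    · have := hqs.2 ⟨0, Nat.pos_of_ne_zero hK⟩; simp at this
    · exact h
  have hn : (0:ℝ) < N := by exact_mod_cast hN
  have hpsum : ∑ k, pY P k = 1 := by
    simp only [pY]; rw [Finset.sum_comm]; exact hPsum
  -- qs is not the uniform quantizer
  have hqs_ne : ∃ ν0 k0, qs ν0 k0 ≠ ((N:ℝ))⁻¹ := by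
    by_contra h
    push_neg at h
    have hu : qs = fun (_ : Fin N) (_ : Fin K) => ((N:ℝ))⁻¹ :=
      funext fun ν => funext fun k => h ν k
    rw [hu, IXN_unif hN P hpX hpsum] at hgt
    linarith
  obtain ⟨ν0, k0, hν0k0⟩ := hqs_ne
  have Hlt : Hcond (pY P) qs < Real.log N :=
    Hcond_lt hN (pY P) hpY hpsum qs hqs.1 hqs.2 ν0 k0 hν0k0
  -- the perturbed quantizer family
  set qt : ℝ → (Fin N → Fin K → ℝ) :=
    fun t ν k => (1-t) * qs ν k + t * ((N:ℝ))⁻¹ with hqt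
  -- continuity of t ↦ IXN P (qt t) at 0
  have hlin : ∀ t, IXN P (qt t) =
      ∑ x, ∑ ν, ((1-t) * pXN P qs x ν + t * (pX P x * ((N:ℝ))⁻¹)) *
        Real.log (((1-t) * pXN P qs x ν + t * (pX P x * ((N:ℝ))⁻¹)) /
          (pX P x * ((1-t) * pN (pY P) qs ν + t * ((N:ℝ))⁻¹))) := by
    intro t
    simp only [IXN, hqt]
    exact Finset.sum_congr rfl fun x _ => Finset.sum_congr rfl fun ν _ => by
      rw [pXN_lin, pN_lin (pY P) hpsum]
  have hcont : Filter.Tendsto (fun t => IXN P (qt t)) (nhds 0) (nhds (IXN P qs)) := by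
    have h0 : ∀ x ν, ((1-(0:ℝ)) * pXN P qs x ν + 0 * (pX P x * ((N:ℝ))⁻¹)) *
        Real.log (((1-(0:ℝ)) * pXN P qs x ν + 0 * (pX P x * ((N:ℝ))⁻¹)) /
          (pX P x * ((1-(0:ℝ)) * pN (pY P) qs ν + 0 * ((N:ℝ))⁻¹)))
        = pXN P qs x ν * Real.log (pXN P qs x ν / (pX P x * pN (pY P) qs ν)) := by
      intro x ν; norm_num
    have key : ∀ x ν, ContinuousAt (fun t : ℝ =>
        ((1-t) * pXN P qs x ν + t * (pX P x * ((N:ℝ))⁻¹)) *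
        Real.log (((1-t) * pXN P qs x ν + t * (pX P x * ((N:ℝ))⁻¹)) /
          (pX P x * ((1-t) * pN (pY P) qs ν + t * ((N:ℝ))⁻¹)))) 0 := by
      intro x ν
      apply cont_term
      · exact Finset.sum_nonneg fun k _ => mul_nonneg (hP x k) (hqs.1 ν k)
      · exact Finset.sum_le_sum fun k _ => mul_le_mul_of_nonneg_right
          (Finset.single_le_sum (fun x' _ => hP x' k) (Finset.mem_univ x)) (hqs.1 ν k)
      · exact hpX x
      · positivity
    have : Filter.Tendsto (fun t => ∑ x, ∑ ν,
        ((1-t) * pXN P qs x ν + t * (pX P x * ((N:ℝ))⁻¹)) *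
        Real.log (((1-t) * pXN P qs x ν + t * (pX P x * ((N:ℝ))⁻¹)) /
          (pX P x * ((1-t) * pN (pY P) qs ν + t * ((N:ℝ))⁻¹)))) (nhds 0)
        (nhds (IXN P qs)) := by
      have := tendsto_finset_sum (Finset.univ : Finset (Fin Kx))
        (fun x _ => tendsto_finset_sum (Finset.univ : Finset (Fin N))
          (fun ν _ => key x ν))
      simp only [h0] at this
      exact this
    exact (funext hlin : (fun t => IXN P (qt t)) = _) ▸ this
  -- pick a small positive t
  have hev1 : ∀ᶠ t in nhds (0:ℝ), I0 < IXN P (qt t) := hcont.eventually (lt_mem_nhds hgt)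
  have hev2 : ∀ᶠ t in nhds (0:ℝ), t < 1 := gt_mem_nhds zero_lt_one
  have hev : ∀ᶠ t in nhdsWithin (0:ℝ) (Set.Ioi 0), I0 < IXN P (qt t) ∧ t < 1 ∧ 0 < t := by
    refine Filter.Eventually.and ?_ (Filter.Eventually.and ?_ ?_)
    · exact nhdsWithin_le_nhds hev1
    · exact nhdsWithin_le_nhds hev2
    · exact eventually_mem_nhdsWithin
  obtain ⟨t, hIt, ht1, ht0⟩ := hev.exists
  -- qt t is a feasible quantizer
  have hΔ : qt t ∈ Δset N K := by
    constructor
    · intro ν k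
      exact add_nonneg (mul_nonneg (by linarith) (hqs.1 ν k))
        (mul_nonneg ht0.le (by positivity))
    · intro k
      simp only [hqt]
      rw [Finset.sum_add_distrib, ← Finset.mul_sum, hqs.2 k, Finset.sum_const,
        Finset.card_univ, Fintype.card_fin, nsmul_eq_mul]
      field_simp
      ring
  have hle := hmax (qt t) hΔ hIt.le
  have hconc := Hcond_concave hN (pY P) (fun k => (hpY k).le) qs hqs.1 ht0.le ht1.le
  rw [Hcond_unif hN (pY P) hpsum] at hconc
  have : Hcond (pY P) (qt t) = Hcond (pY P) (fun ν k => (1-t) * qs ν k + t * ((N:ℝ))⁻¹) := rfl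
  rw [this] at hle
  nlinarith [mul_pos ht0 (sub_pos.2 Hlt)]

end AuxEntropy
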